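/- Let d ≥ 1, α > 0, and let f, c : ℝ^d → ℂ be Schwartz functions satisfying −Δc + α² c = α² f on ℝ^d. Then ‖α²(c − f) − Δf‖_{L²(ℝ^d)} ≤ α^{-2} ‖Δ(Δf)‖_{L²(ℝ^d)}. -/

import Mathlib

open MeasureTheory

/-- The Laplacian `Δg = Σ_k ∂²g/∂x_k²` on `ℝ^d`. -/
noncomputable def lap {d : ℕ} {F : Type*} [NormedAddCommGroup F] [NormedSpace ℝ F]
    (g : EuclideanSpace ℝ (Fin d) → F) (x : EuclideanSpace ℝ (Fin d)) : F :=
  ∑ i : Fin d,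
    fderiv ℝ (fun y => fderiv ℝ g y (EuclideanSpace.single i 1)) x (EuclideanSpace.single i 1)

open SchwartzMap Complex ComplexConjugate

/-- Compatibility: the partial derivative as a continuous linear map on Schwartz space. -/
noncomputable def SchwartzMap.pderivCLM (𝕜 : Type*) {E F : Type*} [NormedAddCommGroup E]
    [NormedSpace ℝ E] [NormedAddCommGroup F] [NormedSpace ℝ F] [RCLike 𝕜] [NormedSpace 𝕜 F]
    (m : E) : 𝓢(E, F) →L[𝕜] 𝓢(E, F) :=
  LineDeriv.lineDerivOpCLM 𝕜 𝓢(E, F) m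

@[simp]
theorem SchwartzMap.pderivCLM_apply (𝕜 : Type*) {E F : Type*} [NormedAddCommGroup E]
    [NormedSpace ℝ E] [NormedAddCommGroup F] [NormedSpace ℝ F] [RCLike 𝕜] [NormedSpace 𝕜 F]
    (m : E) (f : 𝓢(E, F)) (x : E) : SchwartzMap.pderivCLM 𝕜 m f x = fderiv ℝ f x m :=
  rfl

lemma schwartz_sum_apply {d : ℕ} {ι : Type*} (s : Finset ι)
    (F : ι → 𝓢(EuclideanSpace ℝ (Fin d), ℂ)) (x : EuclideanSpace ℝ (Fin d)) :
    (∑ i ∈ s, F i) x = ∑ i ∈ s, F i x := by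
  induction s using Finset.cons_induction with
  | empty => simp
  | cons a s ha ih => simp [Finset.sum_cons, SchwartzMap.add_apply, ih]

/-- The Laplacian as a continuous linear map on Schwartz space. -/
noncomputable def lapC (d : ℕ) :
    𝓢(EuclideanSpace ℝ (Fin d), ℂ) →L[ℂ] 𝓢(EuclideanSpace ℝ (Fin d), ℂ) :=
  ∑ i : Fin d, (SchwartzMap.pderivCLM ℂ (EuclideanSpace.single i 1)).comp
    (SchwartzMap.pderivCLM ℂ (EuclideanSpace.single i 1))

lemma lapC_apply_sum {d : ℕ} (g : 𝓢(EuclideanSpace ℝ (Fin d), ℂ)) (x : EuclideanSpace ℝ (Fin d)) :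
    lapC d g x = ∑ i : Fin d, SchwartzMap.pderivCLM ℂ (EuclideanSpace.single i 1)
      (SchwartzMap.pderivCLM ℂ (EuclideanSpace.single i 1) g) x := by
  have h1 : lapC d g = ∑ i : Fin d, SchwartzMap.pderivCLM ℂ (EuclideanSpace.single i 1)
      (SchwartzMap.pderivCLM ℂ (EuclideanSpace.single i 1) g) := by
    simp [lapC, ContinuousLinearMap.sum_apply]
  rw [h1, schwartz_sum_apply]

lemma lapC_apply {d : ℕ} (g : 𝓢(EuclideanSpace ℝ (Fin d), ℂ)) (x : EuclideanSpace ℝ (Fin d)) :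
    lapC d g x = lap (⇑g) x := by
  rw [lapC_apply_sum, lap]
  refine Finset.sum_congr rfl fun i _ => ?_
  rw [SchwartzMap.pderivCLM_apply]
  have h2 : ⇑(SchwartzMap.pderivCLM ℂ (EuclideanSpace.single i 1) g)
      = fun y => fderiv ℝ (⇑g) y (EuclideanSpace.single i 1) :=
    funext fun y => by rw [SchwartzMap.pderivCLM_apply]
  rw [h2]

lemma lapC_coe {d : ℕ} (g : 𝓢(EuclideanSpace ℝ (Fin d), ℂ)) :
    ⇑(lapC d g) = lap (⇑g) := funext fun x => lapC_apply g x

lemma schwartz_bound {d : ℕ} (g : 𝓢(EuclideanSpace ℝ (Fin d), ℂ)) : ∃ C, ∀ x, ‖g x‖ ≤ C := by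
  refine ⟨SchwartzMap.seminorm ℝ 0 0 g, fun x => ?_⟩
  simpa using g.le_seminorm ℝ 0 0 x

lemma integrable_conj_mul {d : ℕ} (u g : 𝓢(EuclideanSpace ℝ (Fin d), ℂ)) :
    Integrable (fun x => conj (u x) * g x) volume := by
  obtain ⟨C, hC⟩ := schwartz_bound u
  exact (g.integrable (μ := volume)).bdd_mul
    ((continuous_star.comp u.continuous).aestronglyMeasurable)
    (Filter.Eventually.of_forall fun x => by simpa using hC x)

lemma schwartz_memℒp2 {d : ℕ} (g : 𝓢(EuclideanSpace ℝ (Fin d), ℂ)) :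
    MemLp (⇑g) 2 (volume : Measure (EuclideanSpace ℝ (Fin d))) := by
  rw [memLp_two_iff_integrable_sq_norm g.continuous.aestronglyMeasurable]
  refine ((integrable_conj_mul g g).norm).congr
    (Filter.Eventually.of_forall fun x => ?_)
  simp [norm_mul, sq]

/-- Integration by parts: `∫ w̄ ∂ᵢ∂ᵢ w = - ∫ ∂ᵢw̄ ∂ᵢw`. -/
lemma ibp_step {d : ℕ} (w : 𝓢(EuclideanSpace ℝ (Fin d), ℂ)) (i : Fin d) :
    ∫ x, conj (w x) * (SchwartzMap.pderivCLM ℂ (EuclideanSpace.single i 1)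
        (SchwartzMap.pderivCLM ℂ (EuclideanSpace.single i 1) w)) x
      = - ∫ x, conj ((SchwartzMap.pderivCLM ℂ (EuclideanSpace.single i 1) w) x) *
          (SchwartzMap.pderivCLM ℂ (EuclideanSpace.single i 1) w) x := by
  have hconj_diff : Differentiable ℝ (fun x => conj (w x)) := w.differentiable.star
  have hfd : ∀ x, fderiv ℝ (fun y => conj (w y)) x (EuclideanSpace.single i 1)
      = conj (fderiv ℝ (⇑w) x (EuclideanSpace.single i 1)) := by
    intro x
    have h1 : (fun y => conj (w y)) = (fun y => star (w y)) := rfl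
    rw [h1, fderiv_star]
    rfl
  have h1 : Integrable (fun x => fderiv ℝ (fun y => conj (w y)) x (EuclideanSpace.single i 1) *
      (SchwartzMap.pderivCLM ℂ (EuclideanSpace.single i 1) w) x) volume := by
    refine (integrable_conj_mul (SchwartzMap.pderivCLM ℂ (EuclideanSpace.single i 1) w)
      (SchwartzMap.pderivCLM ℂ (EuclideanSpace.single i 1) w)).congr
      (Filter.Eventually.of_forall fun x => ?_)
    simp [hfd x]
  have h2 : Integrable (fun x => conj (w x) *
      fderiv ℝ (⇑(SchwartzMap.pderivCLM ℂ (EuclideanSpace.single i 1) w)) x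
        (EuclideanSpace.single i 1)) volume := by
    refine (integrable_conj_mul w (SchwartzMap.pderivCLM ℂ (EuclideanSpace.single i 1)
      (SchwartzMap.pderivCLM ℂ (EuclideanSpace.single i 1) w))).congr
      (Filter.Eventually.of_forall fun x => ?_)
    simp
  have h3 := integrable_conj_mul w (SchwartzMap.pderivCLM ℂ (EuclideanSpace.single i 1) w)
  have key := integral_mul_fderiv_eq_neg_fderiv_mul_of_integrable (μ := volume)
    (f := fun x => conj (w x))
    (g := ⇑(SchwartzMap.pderivCLM ℂ (EuclideanSpace.single i 1) w))
    (v := EuclideanSpace.single i 1) h1 h2 h3 (fun x _ => hconj_diff x)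
    (fun x _ => (SchwartzMap.pderivCLM ℂ (EuclideanSpace.single i 1) w).differentiableAt)
  have lhs_eq : ∫ x, conj (w x) * (SchwartzMap.pderivCLM ℂ (EuclideanSpace.single i 1)
        (SchwartzMap.pderivCLM ℂ (EuclideanSpace.single i 1) w)) x
      = ∫ x, conj (w x) *
        fderiv ℝ (⇑(SchwartzMap.pderivCLM ℂ (EuclideanSpace.single i 1) w)) x
          (EuclideanSpace.single i 1) :=
    integral_congr_ae (Filter.Eventually.of_forall fun x => by simp)
  have rhs_eq : ∫ x, fderiv ℝ (fun y => conj (w y)) x (EuclideanSpace.single i 1) *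
        (SchwartzMap.pderivCLM ℂ (EuclideanSpace.single i 1) w) x
      = ∫ x, conj ((SchwartzMap.pderivCLM ℂ (EuclideanSpace.single i 1) w) x) *
        (SchwartzMap.pderivCLM ℂ (EuclideanSpace.single i 1) w) x :=
    integral_congr_ae (Filter.Eventually.of_forall fun x => by simp [hfd x])
  exact lhs_eq.trans (key.trans (congrArg Neg.neg rhs_eq))

lemma re_integral_conj_mul_lap_nonpos {d : ℕ} (w : 𝓢(EuclideanSpace ℝ (Fin d), ℂ)) :
    (∫ x, conj (w x) * (lapC d w) x).re ≤ 0 := by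
  have hsplit : ∫ x, conj (w x) * (lapC d w) x
      = ∑ i : Fin d, ∫ x, conj (w x) * (SchwartzMap.pderivCLM ℂ (EuclideanSpace.single i 1)
        (SchwartzMap.pderivCLM ℂ (EuclideanSpace.single i 1) w)) x := by
    rw [← integral_finset_sum _ (fun i _ => integrable_conj_mul w _)]
    refine integral_congr_ae (Filter.Eventually.of_forall fun x => ?_)
    simp only [lapC_apply_sum, Finset.mul_sum]
  rw [hsplit, Complex.re_sum]
  refine Finset.sum_nonpos fun i _ => ?_
  rw [ibp_step w i]
  set g := SchwartzMap.pderivCLM ℂ (EuclideanSpace.single i 1) w with hg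
  have hint : Integrable (fun x => conj (g x) * g x) volume := integrable_conj_mul g g
  have hre : (∫ x, conj (g x) * g x).re = ∫ x, (conj (g x) * g x).re := by
    have h3 := integral_re hint
    simpa using h3.symm
  have hnonneg : 0 ≤ (∫ x, conj (g x) * g x).re := by
    rw [hre]
    refine integral_nonneg fun x => ?_
    have h2 : conj (g x) * g x = (Complex.normSq (g x) : ℂ) := by
      rw [mul_comm, Complex.mul_conj]
    simp only [h2]
    simpa using Complex.normSq_nonneg (g x)
  simpa using neg_nonpos.mpr hnonneg

/-- The resolvent bound: if `β w - Δ w = h` then `‖w‖₂ ≤ β⁻¹ ‖h‖₂`. -/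
lemma resolvent_bound {d : ℕ} (β : ℝ) (hβ : 0 < β)
    (w h : 𝓢(EuclideanSpace ℝ (Fin d), ℂ))
    (hw : ∀ x, (β : ℂ) * w x - lapC d w x = h x) :
    eLpNorm (⇑w) 2 volume ≤ ENNReal.ofReal β⁻¹ * eLpNorm (⇑h) 2 volume := by
  have memw := schwartz_memℒp2 w
  have memh := schwartz_memℒp2 h
  set W := memw.toLp ⇑w with hW
  set H := memh.toLp ⇑h with hH
  have hinner : (inner ℂ W H : ℂ) = ∫ x, conj (w x) * h x := by
    rw [MeasureTheory.L2.inner_def]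
    refine integral_congr_ae ?_
    filter_upwards [memw.coeFn_toLp, memh.coeFn_toLp] with x hx hy
    rw [RCLike.inner_apply, hx, hy, mul_comm]
  have hWsq : ‖W‖ ^ 2 = (∫ x, conj (w x) * w x).re := by
    have h1 : (inner ℂ W W : ℂ) = ∫ x, conj (w x) * w x := by
      rw [MeasureTheory.L2.inner_def]
      refine integral_congr_ae ?_
      filter_upwards [memw.coeFn_toLp] with x hx
      rw [RCLike.inner_apply, hx, mul_comm]
    have h2 := @inner_self_eq_norm_sq ℂ _ _ _ _ W
    rw [h1] at h2
    exact h2.symm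
  have hsub : ∫ x, conj (w x) * h x
      = (β : ℂ) * (∫ x, conj (w x) * w x) - ∫ x, conj (w x) * (lapC d w) x := by
    have h1 : (fun x => conj (w x) * h x)
        = fun x => (β : ℂ) * (conj (w x) * w x) - conj (w x) * (lapC d w) x := by
      funext x; rw [← hw x]; ring
    rw [h1, integral_sub ((integrable_conj_mul w w).const_mul _) (integrable_conj_mul w _),
      integral_const_mul]
  have key1 : β * ‖W‖ ^ 2 ≤ (inner ℂ W H : ℂ).re := by
    rw [hinner, hsub, hWsq]
    have hnp := re_integral_conj_mul_lap_nonpos w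
    set A := (∫ x, conj (w x) * w x) with hA
    set B := (∫ x, conj (w x) * (lapC d w) x) with hB
    have hre : ((β : ℂ) * A - B).re = β * A.re - B.re := by simp
    rw [hre]
    nlinarith [hnp]
  have key2 : (inner ℂ W H : ℂ).re ≤ ‖W‖ * ‖H‖ :=
    (Complex.re_le_norm _).trans (norm_inner_le_norm W H)
  have hWnorm : β * ‖W‖ ^ 2 ≤ ‖W‖ * ‖H‖ := key1.trans key2
  have hfinal : ‖W‖ ≤ β⁻¹ * ‖H‖ := by
    rcases eq_or_lt_of_le (norm_nonneg W) with h0 | h0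
    · rw [← h0]
      positivity
    · have hb : β * ‖W‖ ≤ ‖H‖ :=
        (mul_le_mul_iff_of_pos_right h0).mp (by nlinarith : (β * ‖W‖) * ‖W‖ ≤ ‖H‖ * ‖W‖)
      have h1 : ‖W‖ = β⁻¹ * (β * ‖W‖) := by field_simp
      rw [h1]
      exact mul_le_mul_of_nonneg_left hb (by positivity)
  have hWe : eLpNorm (⇑w) 2 volume = ENNReal.ofReal ‖W‖ := by
    rw [hW, Lp.norm_toLp, ENNReal.ofReal_toReal memw.2.ne]
  have hHe : eLpNorm (⇑h) 2 volume = ENNReal.ofReal ‖H‖ := by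
    rw [hH, Lp.norm_toLp, ENNReal.ofReal_toReal memh.2.ne]
  rw [hWe, hHe, ← ENNReal.ofReal_mul (by positivity)]
  exact ENNReal.ofReal_le_ofReal hfinal

theorem order_parameter_capillary_close_to_laplacian (d : ℕ) (hd : 1 ≤ d) (α : ℝ) (hα : 0 < α)
    (f c : SchwartzMap (EuclideanSpace ℝ (Fin d)) ℂ)
    (heq : ∀ x, -lap (⇑c) x + (α : ℂ) ^ 2 * c x = (α : ℂ) ^ 2 * f x) :
    eLpNorm (fun x => (α : ℂ) ^ 2 * (c x - f x) - lap (⇑f) x) 2 volume ≤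
      ENNReal.ofReal (α ^ 2)⁻¹ * eLpNorm (lap (lap (⇑f))) 2 volume := by
  have hβ : (0 : ℝ) < α ^ 2 := by positivity
  set u := c - f with hu
  have hc : lapC d c = ((α : ℂ) ^ 2) • u := by
    ext x
    rw [lapC_apply]
    have h := heq x
    have h2 : lap (⇑c) x = (α : ℂ) ^ 2 * c x - (α : ℂ) ^ 2 * f x := by
      linear_combination -h
    rw [h2, hu]
    simp only [SchwartzMap.smul_apply, SchwartzMap.sub_apply, smul_eq_mul]
    ring
  set w := lapC d u with hwdef
  have hwc : w = ((α : ℂ) ^ 2) • u - lapC d f := by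
    rw [hwdef, hu, map_sub, hc, hu]
  have hfun : (fun x => (α : ℂ) ^ 2 * (c x - f x) - lap (⇑f) x) = ⇑w := by
    funext x
    rw [hwc]
    simp only [SchwartzMap.sub_apply, SchwartzMap.smul_apply, lapC_apply, hu,
      SchwartzMap.sub_apply, smul_eq_mul]
  have hlap2 : lap (lap (⇑f)) = ⇑(lapC d (lapC d f)) := by
    funext x
    rw [lapC_apply, lapC_coe]
  have hPDE : ∀ x, ((α ^ 2 : ℝ) : ℂ) * w x - lapC d w x = (lapC d (lapC d f)) x := by
    intro x
    have hLw : lapC d w = ((α : ℂ) ^ 2) • w - lapC d (lapC d f) := by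
      calc lapC d w = lapC d (((α : ℂ) ^ 2) • u) - lapC d (lapC d f) := by
            rw [← map_sub, ← hwc]
        _ = ((α : ℂ) ^ 2) • (lapC d u) - lapC d (lapC d f) := by rw [_root_.map_smul]
        _ = ((α : ℂ) ^ 2) • w - lapC d (lapC d f) := by rw [← hwdef]
    rw [hLw]
    push_cast
    simp only [Pi.sub_apply, Pi.smul_apply, smul_eq_mul]
    ring
  have hmain := resolvent_bound (α ^ 2) hβ w (lapC d (lapC d f)) hPDE
  rw [hfun, hlap2]
  exact hmain
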